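/- Let n₁₂, n₂₃, n₃₄, n₁₄ be integers ≥ 3, μ_{ij} = 4·cos²(π/n_{ij}), and let v₁₃, v₂₃, v₂₄, v₃₄, v₄₂ be negative reals. In ℝ⁴ set α_j = e_j* for j = 1, 2, 3, 4 (the coordinate functionals) and let v₁, v₂, v₃, v₄ be the columns of the matrix with rows (2, −μ₁₂, v₁₃, −μ₁₄), (−1, 2, v₂₃, v₂₄), (−1, μ₂₃/v₂₃, 2, v₃₄), (−1, v₄₂, μ₃₄/v₃₄, 2). Let W be the Coxeter group on four generators s₁, s₂, s₃, s₄ whose Coxeter matrix has m₁₂ = n₁₂, m₂₃ = n₂₃, m₃₄ = n₃₄, m₁₄ = n₁₄, and m₁₃ = m₂₄ = ∞. Then there exists a unique group homomorphism ρ : W → GL(4, ℝ) with ρ(s_j) = R_j for j = 1, 2, 3, 4, where R_j is the projective reflection associated with (α_j, v_j). -/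

import Mathlib

open Matrix

open Polynomial Complex in
lemma my_dvd_lem (n : ℕ) (hn : 3 ≤ n) :
    ((X - 1) * (X ^ 2 - C (4 * Real.cos (Real.pi / n) ^ 2 - 2) * X + 1)) ∣
      (X ^ n - 1 : ℝ[X]) := by
  have hn0 : (0:ℝ) < n := by
    have : (0:ℕ) < n := by omega
    exact_mod_cast this
  set θ : ℝ := 2 * Real.pi / n with hθ
  have hc : 4 * Real.cos (Real.pi / n) ^ 2 - 2 = 2 * Real.cos θ := by
    have : θ = 2 * (Real.pi / n) := by rw [hθ]; ring
    rw [this, Real.cos_two_mul]; ring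
  rw [hc]
  have hθpos : 0 < θ := by positivity
  have hθlt : θ < Real.pi := by
    rw [hθ, div_lt_iff₀ hn0]
    have h3 : (3:ℝ) ≤ n := by exact_mod_cast hn
    nlinarith [Real.pi_pos]
  have hsin : 0 < Real.sin θ := Real.sin_pos_of_pos_of_lt_pi hθpos hθlt
  set ζ : ℂ := Complex.exp (θ * I) with hζ
  have hζIm : ζ.im = Real.sin θ := Complex.exp_ofReal_mul_I_im θ
  have hζinv : ζ⁻¹ = Complex.exp (-(θ * I)) := by
    rw [hζ, ← Complex.exp_neg]
  have hζinvIm : (ζ⁻¹).im = -Real.sin θ := by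
    rw [hζinv]
    have := Complex.exp_ofReal_mul_I_im (-θ)
    simpa [neg_mul] using this
  have hζn : ζ ^ n = 1 := by
    rw [hζ, ← Complex.exp_nat_mul]
    have : (n : ℂ) * (θ * I) = 2 * Real.pi * I := by
      have hnθ : (n:ℝ) * θ = 2 * Real.pi := by
        rw [hθ]; field_simp
      push_cast
      rw [show (n : ℂ) * (θ * I) = ((n:ℝ) * θ : ℝ) * I by push_cast; ring, hnθ]
      push_cast; ring
    rw [this, Complex.exp_two_pi_mul_I]
  have hζ0 : ζ ≠ 0 := Complex.exp_ne_zero _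
  have hζinvn : (ζ⁻¹) ^ n = 1 := by rw [inv_pow, hζn, inv_one]
  -- distinctness
  have h1ζ : (1 : ℂ) ≠ ζ := fun h => by
    have := congrArg Complex.im h; simp [hζIm] at this; exact absurd this.symm (ne_of_gt hsin)
  have h1ζi : (1 : ℂ) ≠ ζ⁻¹ := fun h => by
    have := congrArg Complex.im h; rw [hζinvIm] at this; simp at this
    exact absurd this (ne_of_gt hsin)
  have hζζi : ζ ≠ ζ⁻¹ := fun h => by
    have := congrArg Complex.im h; rw [hζIm, hζinvIm] at this; linarith
  -- divisibility over ℂ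
  have d1 : (X - C (1:ℂ)) ∣ X ^ n - 1 := by
    rw [dvd_iff_isRoot]; simp [IsRoot]
  have d2 : (X - C ζ) ∣ X ^ n - 1 := by
    rw [dvd_iff_isRoot]; simp [IsRoot, hζn]
  have d3 : (X - C ζ⁻¹) ∣ X ^ n - 1 := by
    rw [dvd_iff_isRoot]; simp [IsRoot, hζinvn]
  have cop23 : IsCoprime (X - C ζ) (X - C ζ⁻¹) :=
    isCoprime_X_sub_C_of_isUnit_sub (sub_ne_zero_of_ne hζζi).isUnit
  have cop12 : IsCoprime (X - C (1:ℂ)) (X - C ζ) :=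
    isCoprime_X_sub_C_of_isUnit_sub (sub_ne_zero_of_ne h1ζ).isUnit
  have cop13 : IsCoprime (X - C (1:ℂ)) (X - C ζ⁻¹) :=
    isCoprime_X_sub_C_of_isUnit_sub (sub_ne_zero_of_ne h1ζi).isUnit
  have dprod : (X - C (1:ℂ)) * ((X - C ζ) * (X - C ζ⁻¹)) ∣ X ^ n - 1 :=
    (cop12.mul_right cop13).mul_dvd d1 (cop23.mul_dvd d2 d3)
  -- transfer to ℝ
  have hsum : ζ + ζ⁻¹ = ((2 * Real.cos θ : ℝ) : ℂ) := by
    rw [hζ, hζinv]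
    rw [show -(↑θ * I) = ((-θ : ℝ) : ℂ) * I by push_cast; ring]
    rw [Complex.exp_mul_I, Complex.exp_mul_I]
    push_cast
    simp [Complex.cos_neg, Complex.sin_neg]
    ring
  have hmap : ((X - 1) * (X ^ 2 - C (2 * Real.cos θ) * X + 1) : ℝ[X]).map
      (algebraMap ℝ ℂ) = (X - C (1:ℂ)) * ((X - C ζ) * (X - C ζ⁻¹)) := by
    have hprod : ζ * ζ⁻¹ = 1 := mul_inv_cancel₀ hζ0
    have h2 : ((2 * Real.cos θ : ℝ) : ℂ) = ζ + ζ⁻¹ := hsum.symm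
    simp only [Polynomial.map_mul, Polynomial.map_sub, Polynomial.map_add,
      Polynomial.map_pow, Polynomial.map_one, Polynomial.map_X, map_C]
    rw [show (algebraMap ℝ ℂ) (2 * Real.cos θ) = ζ + ζ⁻¹ by
      rw [← h2]; rfl]
    have hC : C ζ * C ζ⁻¹ = (1 : ℂ[X]) := by rw [← C_mul, hprod, C_1]
    rw [C_add]
    simp only [C_1]
    linear_combination ((1:ℂ[X]) - X) * hC
  rw [← Polynomial.map_dvd_map' (algebraMap ℝ ℂ), hmap]
  convert dprod using 1
  simp [Polynomial.map_sub, Polynomial.map_pow, Polynomial.map_one]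

open Polynomial in
lemma my_pow_lem {A : Type*} [Ring A] [Algebra ℝ A] (T : A) (n : ℕ) (hn : 3 ≤ n)
    (h : (T - 1) * (T * T - (4 * Real.cos (Real.pi / n) ^ 2 - 2) • T + 1) = 0) :
    T ^ n = 1 := by
  set c : ℝ := 4 * Real.cos (Real.pi / n) ^ 2 - 2 with hc
  obtain ⟨q, hq⟩ := my_dvd_lem n hn
  rw [← hc] at hq
  have h2 := congrArg (Polynomial.aeval T) hq
  simp only [_root_.map_mul, _root_.map_sub, _root_.map_add, _root_.map_pow, _root_.map_one, aeval_X, aeval_C] at h2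
  rw [← Algebra.smul_def] at h2
  rw [← pow_two] at h
  rw [h, zero_mul] at h2
  rw [sub_eq_zero] at h2
  exact h2


open Matrix in
lemma my_vmv_mul (a b : Fin 4 → ℝ) (p q : Fin 4) :
    vecMulVec a (Pi.single p 1) * vecMulVec b (Pi.single q 1)
      = b p • vecMulVec a (Pi.single q 1) := by
  ext r s
  simp only [Matrix.mul_apply, Matrix.vecMulVec_apply, Matrix.smul_apply, Pi.single_apply,
    smul_eq_mul, mul_ite, ite_mul, mul_one, mul_zero, one_mul, zero_mul]
  split
  · rw [Finset.sum_ite_eq' Finset.univ p]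
    simp [mul_comm]
  · simp

open Matrix in
lemma my_cubic (u w : Fin 4 → ℝ) (i j : Fin 4) (hui : u i = 2) (hwj : w j = 2) :
    (((1 - vecMulVec u (Pi.single i 1)) * (1 - vecMulVec w (Pi.single j 1))) - 1) *
      (((1 - vecMulVec u (Pi.single i 1)) * (1 - vecMulVec w (Pi.single j 1))) *
        ((1 - vecMulVec u (Pi.single i 1)) * (1 - vecMulVec w (Pi.single j 1)))
        - (w i * u j - 2) • ((1 - vecMulVec u (Pi.single i 1)) * (1 - vecMulVec w (Pi.single j 1)))
        + 1) = 0 := by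
  simp only [mul_sub, sub_mul, mul_add, add_mul, mul_one, one_mul, smul_sub, smul_add,
    my_vmv_mul, smul_mul_assoc, mul_smul_comm, smul_smul, hui, hwj]
  module

open Matrix in
lemma my_key (n : ℕ) (hn : 3 ≤ n) (u w : Fin 4 → ℝ) (i j : Fin 4)
    (hui : u i = 2) (hwj : w j = 2)
    (hμ : w i * u j = 4 * Real.cos (Real.pi / n) ^ 2) :
    ((1 - vecMulVec u (Pi.single i 1)) * (1 - vecMulVec w (Pi.single j 1))) ^ n = 1 := by
  apply my_pow_lem _ n hn
  have h := my_cubic u w i j hui hwj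
  rw [hμ] at h
  exact h

open Matrix in
lemma my_invol (u : Fin 4 → ℝ) (i : Fin 4) (hui : u i = 2) :
    ((1 - vecMulVec u (Pi.single i 1)) * (1 - vecMulVec u (Pi.single i 1))) = 1 := by
  simp only [mul_sub, sub_mul, mul_one, one_mul, my_vmv_mul, hui]
  module

noncomputable def myφ : ((Fin 4 → ℝ) ≃ₗ[ℝ] (Fin 4 → ℝ)) →* Matrix (Fin 4) (Fin 4) ℝ :=
  (LinearMap.toMatrixAlgEquiv' :
      ((Fin 4 → ℝ) →ₗ[ℝ] (Fin 4 → ℝ)) ≃ₐ[ℝ] Matrix (Fin 4) (Fin 4) ℝ).toAlgHom.toMonoidHom.comp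
    LinearEquiv.automorphismGroup.toLinearMapMonoidHom

lemma myφ_inj : Function.Injective myφ := by
  intro e f h
  apply LinearEquiv.toLinearMap_injective
  exact LinearMap.toMatrixAlgEquiv'.injective h

lemma myφ_apply (e : (Fin 4 → ℝ) ≃ₗ[ℝ] (Fin 4 → ℝ)) (p q : Fin 4) :
    myφ e p q = e (fun j' => if j' = q then 1 else 0) p := by
  show LinearMap.toMatrixAlgEquiv' e.toLinearMap p q = _
  rw [LinearMap.toMatrixAlgEquiv']
  simp [LinearMap.toMatrix'_apply]
  rw [show (Pi.single q 1 : Fin 4 → ℝ) = fun j' => if j' = q then 1 else 0 from by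
    funext j'; simp [Pi.single_apply]]



/-- The general-position representation of the Coxeter group of the orbifold
`D²(; n₁₂, n₂₃, n₃₄, n₁₄) × ℝ`: with `αⱼ = eⱼ*` the coordinate functionals of ℝ⁴ and the
vectors `v₁, …, v₄` given by the columns of `Mv`, there is a unique group homomorphism
`ρ : W →* GL(ℝ⁴)` sending each Coxeter generator `sⱼ` to the projective reflection
`Rⱼ x = x - αⱼ(x) • vⱼ`. Here the Coxeter matrix entry `0` encodes `∞`. -/
theorem stmt_16 (n₁₂ n₂₃ n₃₄ n₁₄ : ℕ)
    (hn₁₂ : 3 ≤ n₁₂) (hn₂₃ : 3 ≤ n₂₃) (hn₃₄ : 3 ≤ n₃₄) (hn₁₄ : 3 ≤ n₁₄)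
    (μ₁₂ μ₂₃ μ₃₄ μ₁₄ : ℝ)
    (hμ₁₂ : μ₁₂ = 4 * Real.cos (Real.pi / n₁₂) ^ 2)
    (hμ₂₃ : μ₂₃ = 4 * Real.cos (Real.pi / n₂₃) ^ 2)
    (hμ₃₄ : μ₃₄ = 4 * Real.cos (Real.pi / n₃₄) ^ 2)
    (hμ₁₄ : μ₁₄ = 4 * Real.cos (Real.pi / n₁₄) ^ 2)
    (v₁₃ v₂₃ v₂₄ v₃₄ v₄₂ : ℝ)
    (hv₁₃ : v₁₃ < 0) (hv₂₃ : v₂₃ < 0) (hv₂₄ : v₂₄ < 0) (hv₃₄ : v₃₄ < 0) (hv₄₂ : v₄₂ < 0)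
    (Mv : Matrix (Fin 4) (Fin 4) ℝ)
    (hMv : Mv = !![2, -μ₁₂, v₁₃, -μ₁₄;
                   -1, 2, v₂₃, v₂₄;
                   -1, μ₂₃ / v₂₃, 2, v₃₄;
                   -1, v₄₂, μ₃₄ / v₃₄, 2])
    (R : Fin 4 → ((Fin 4 → ℝ) ≃ₗ[ℝ] (Fin 4 → ℝ)))
    (hR : ∀ j x, R j x = x - x j • (Mvᵀ j))
    (M : CoxeterMatrix (Fin 4))
    (hM : M.M = !![1, n₁₂, 0, n₁₄; n₁₂, 1, n₂₃, 0; 0, n₂₃, 1, n₃₄; n₁₄, 0, n₃₄, 1])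
    {W : Type*} [Group W] (cs : CoxeterSystem M W) :
    ∃! ρ : W →* ((Fin 4 → ℝ) ≃ₗ[ℝ] (Fin 4 → ℝ)), ∀ j, ρ (cs.simple j) = R j := by
  subst hMv
  set Mv : Matrix (Fin 4) (Fin 4) ℝ := !![2, -μ₁₂, v₁₃, -μ₁₄; -1, 2, v₂₃, v₂₄;
    -1, μ₂₃ / v₂₃, 2, v₃₄; -1, v₄₂, μ₃₄ / v₃₄, 2] with hMv
  have hφR : ∀ k, myφ (R k) = 1 - vecMulVec (Mvᵀ k) (Pi.single k 1) := by
    intro k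
    ext p q
    rw [myφ_apply, hR]
    simp only [Pi.sub_apply, Pi.smul_apply, smul_eq_mul, Matrix.sub_apply, Matrix.one_apply,
      Matrix.vecMulVec_apply, Pi.single_apply]
    have hswap : (if q = k then (1:ℝ) else 0) = (if k = q then 1 else 0) := by
      by_cases h : k = q
      · simp [h]
      · simp [h, Ne.symm h]
    rw [hswap]
    ring
  have hlift : M.IsLiftable R := by
    intro i i'
    apply myφ_inj
    rw [map_pow, _root_.map_mul, _root_.map_one, hφR, hφR]
    show _ ^ (M.M i i') = 1
    rw [hM]
    fin_cases i <;> fin_cases i'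
    · show _ ^ 1 = 1
      rw [pow_one]; exact my_invol _ _ rfl
    · show _ ^ n₁₂ = 1
      exact my_key n₁₂ hn₁₂ _ _ _ _ rfl rfl (by show -μ₁₂ * -1 = _; rw [hμ₁₂]; ring)
    · show _ ^ 0 = 1
      rw [pow_zero]
    · show _ ^ n₁₄ = 1
      exact my_key n₁₄ hn₁₄ _ _ _ _ rfl rfl (by show -μ₁₄ * -1 = _; rw [hμ₁₄]; ring)
    · show _ ^ n₁₂ = 1
      exact my_key n₁₂ hn₁₂ _ _ _ _ rfl rfl (by show -1 * -μ₁₂ = _; rw [hμ₁₂]; ring)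
    · show _ ^ 1 = 1
      rw [pow_one]; exact my_invol _ _ rfl
    · show _ ^ n₂₃ = 1
      exact my_key n₂₃ hn₂₃ _ _ _ _ rfl rfl
        (by show v₂₃ * (μ₂₃ / v₂₃) = _; rw [hμ₂₃]; field_simp [hv₂₃.ne])
    · show _ ^ 0 = 1
      rw [pow_zero]
    · show _ ^ 0 = 1
      rw [pow_zero]
    · show _ ^ n₂₃ = 1
      exact my_key n₂₃ hn₂₃ _ _ _ _ rfl rfl
        (by show μ₂₃ / v₂₃ * v₂₃ = _; rw [hμ₂₃]; field_simp [hv₂₃.ne])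
    · show _ ^ 1 = 1
      rw [pow_one]; exact my_invol _ _ rfl
    · show _ ^ n₃₄ = 1
      exact my_key n₃₄ hn₃₄ _ _ _ _ rfl rfl
        (by show v₃₄ * (μ₃₄ / v₃₄) = _; rw [hμ₃₄]; field_simp [hv₃₄.ne])
    · show _ ^ n₁₄ = 1
      exact my_key n₁₄ hn₁₄ _ _ _ _ rfl rfl (by show -1 * -μ₁₄ = _; rw [hμ₁₄]; ring)
    · show _ ^ 0 = 1
      rw [pow_zero]
    · show _ ^ n₃₄ = 1
      exact my_key n₃₄ hn₃₄ _ _ _ _ rfl rfl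
        (by show μ₃₄ / v₃₄ * v₃₄ = _; rw [hμ₃₄]; field_simp [hv₃₄.ne])
    · show _ ^ 1 = 1
      rw [pow_one]; exact my_invol _ _ rfl
  refine ⟨cs.lift ⟨R, hlift⟩, fun j => cs.lift_apply_simple hlift j, ?_⟩
  intro ρ' hρ'
  apply cs.ext_simple
  intro i
  rw [hρ' i, cs.lift_apply_simple hlift i]
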